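/- Fix points and labels (X_1,Y_1),…,(X_n,Y_n) ∈ B^d × ℝ, a width N ∈ ℕ and λ > 0, and write L(θ) := (1/n) Σ_{i=1}^n (f_θ(X_i) - Y_i)² for θ ∈ ℝ^{(d+2)N}. If θ* minimizes L(θ) + λ κ(θ) over ℝ^{(d+2)N}, then there exists θ̃* minimizing L(θ) + (λ/2) ‖θ‖₂² over ℝ^{(d+2)N} such that f_{θ*}(x) = f_{θ̃*}(x) for all x ∈ B^d. Conversely, every minimizer of L(θ) + (λ/2) ‖θ‖₂² over ℝ^{(d+2)N} is also a minimizer of L(θ) + λ κ(θ). -/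

import Mathlib

open MeasureTheory Real

noncomputable section

/-- Euclidean space ℝ^d. -/
abbrev E (d : ℕ) := EuclideanSpace ℝ (Fin d)

/-- The ReLU function σ(t) = max{t, 0}. -/
def relu (t : ℝ) : ℝ := max t 0

/-- The quantity (xᵀ,1)v : the inner product of (x,1) ∈ ℝ^{d+1} with v ∈ ℝ^{d+1}. -/
def aff {d : ℕ} (x : E d) (v : E (d + 1)) : ℝ :=
  (∑ i : Fin d, x i * v i.castSucc) + v (Fin.last d)

/-- Parameters θ = (a_1, w_1, …, a_N, w_N) of a shallow ReLU network of width N. -/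
abbrev Params (d N : ℕ) := (Fin N → ℝ) × (Fin N → E (d + 1))

/-- The network function f_θ(x) = Σ_i a_i σ((xᵀ,1) w_i). -/
def networkFn {d N : ℕ} (θ : Params d N) (x : E d) : ℝ :=
  ∑ i, θ.1 i * relu (aff x (θ.2 i))

/-- The path norm κ(θ) = Σ_i |a_i| ‖w_i‖₂. -/
def pathNorm {d N : ℕ} (θ : Params d N) : ℝ :=
  ∑ i, |θ.1 i| * ‖θ.2 i‖

/-- The squared Euclidean norm ‖θ‖₂² of the parameter vector. -/
def paramNormSq {d N : ℕ} (θ : Params d N) : ℝ :=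
  (∑ i, (θ.1 i) ^ 2) + ∑ i, ‖θ.2 i‖ ^ 2

/-- NN(N): functions on the unit ball B^d realized by a width-N shallow ReLU network. -/
def NNclass (d N : ℕ) : Set (E d → ℝ) :=
  {f | ∃ θ : Params d N, ∀ x : E d, ‖x‖ ≤ 1 → f x = networkFn θ x}

/-- NN(N, M): functions realized by a width-N network with path norm κ(θ) ≤ M. -/
def NNclassM (d N : ℕ) (M : ℝ) : Set (E d → ℝ) :=
  {f | ∃ θ : Params d N, pathNorm θ ≤ M ∧ ∀ x : E d, ‖x‖ ≤ 1 → f x = networkFn θ x}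

/-- κ(f) = inf{ Σ_j |c_j| : f(x) = Σ_j c_j σ((xᵀ,1)v_j) on B^d, v_j ∈ S^d }. -/
def kappaF {d : ℕ} (f : E d → ℝ) : ℝ :=
  sInf {s | ∃ (m : ℕ) (c : Fin m → ℝ) (v : Fin m → E (d + 1)),
    (∀ j, ‖v j‖ = 1) ∧ (∀ x : E d, ‖x‖ ≤ 1 → f x = ∑ j, c j * relu (aff x (v j))) ∧
    s = ∑ j, |c j|}

/-- S_- = {v ∈ S^d : v_{d+1} ≤ -√2/2}. -/
def Sminus (d : ℕ) : Set (E (d + 1)) :=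
  {v | ‖v‖ = 1 ∧ v (Fin.last d) ≤ -(Real.sqrt 2 / 2)}

/-- S_+ = -S_-. -/
def Splus (d : ℕ) : Set (E (d + 1)) := {v | -v ∈ Sminus d}

/-- S_0 = S^d \ (S_- ∪ S_+). -/
def Szero (d : ℕ) : Set (E (d + 1)) := {v | ‖v‖ = 1} \ (Sminus d ∪ Splus d)

/-- The variation class F_σ(M): functions f(x) = ∫_{S^d} σ((xᵀ,1)v) dμ(v) for a signed Radon
measure μ on S^d with ‖μ‖ ≤ M (represented by its Jordan decomposition μ = μp - μn). -/
def Fsigma (d : ℕ) (M : ℝ) : Set (E d → ℝ) :=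
  {f | ∃ μp μn : Measure (E (d + 1)), IsFiniteMeasure μp ∧ IsFiniteMeasure μn ∧
    μp {v | ‖v‖ = 1}ᶜ = 0 ∧ μn {v | ‖v‖ = 1}ᶜ = 0 ∧
    (μp Set.univ).toReal + (μn Set.univ).toReal ≤ M ∧
    ∀ x : E d, ‖x‖ ≤ 1 →
      f x = (∫ v, relu (aff x v) ∂μp) - ∫ v, relu (aff x v) ∂μn}

/-- Empirical L²(μ_n) norm: ‖f‖_{L²(μ_n)} = ((1/n) Σ_i f(X_i)²)^{1/2}. -/
def empNorm {d n : ℕ} (X : Fin n → E d) (f : E d → ℝ) : ℝ :=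
  Real.sqrt ((∑ i, (f (X i)) ^ 2) / n)

/-- Local complexity G_n(F; δ, ξ) = E[ sup { |(1/n) Σ_i ξ_i f(X_i)| : f ∈ F, ‖f‖_{L²(μ_n)} ≤ δ} ]. -/
def localComplexity {d n : ℕ} {Ω : Type*} [MeasurableSpace Ω] (P : Measure Ω)
    (F : Set (E d → ℝ)) (X : Fin n → E d) (δ : ℝ) (ξ : Fin n → Ω → ℝ) : ℝ :=
  ∫ ω, sSup {r | ∃ f ∈ F, empNorm X f ≤ δ ∧ r = |(∑ i, ξ i ω * f (X i)) / n|} ∂P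

/-- star(F) = {a f : f ∈ F, a ∈ [0,1]}. -/
def starHull {d : ℕ} (F : Set (E d → ℝ)) : Set (E d → ℝ) :=
  {g | ∃ f ∈ F, ∃ a : ℝ, 0 ≤ a ∧ a ≤ 1 ∧ g = fun x => a * f x}

/-- ∂F = {f₁ - f₂ : f₁, f₂ ∈ F}. -/
def diffClass {d : ℕ} (F : Set (E d → ℝ)) : Set (E d → ℝ) :=
  {g | ∃ f₁ ∈ F, ∃ f₂ ∈ F, g = f₁ - f₂}

/-- Truncation operator T_b. -/
def truncate {d : ℕ} (b : ℝ) (f : E d → ℝ) : E d → ℝ := fun x => max (-b) (min b (f x))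

/-- The Hölder ball H^α on B^d. -/
def HolderBall (d : ℕ) (α : ℝ) : Set (E d → ℝ) :=
  {h | ∃ (r : ℕ) (β : ℝ) (g : E d → ℝ), α = r + β ∧ 0 < β ∧ β ≤ 1 ∧
    (∀ x : E d, ‖x‖ ≤ 1 → g x = h x) ∧ ContDiff ℝ r g ∧
    (∀ k : ℕ, k ≤ r → ∀ x, ‖iteratedFDeriv ℝ k g x‖ ≤ 1) ∧
    (∀ x y : E d, ‖iteratedFDeriv ℝ r g x - iteratedFDeriv ℝ r g y‖ ≤ ‖x - y‖ ^ β)}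
/-- Balancing map: rescale each neuron so that |a_i| = ‖w_i‖. -/
def bal {d N : ℕ} (θ : Params d N) : Params d N :=
  (fun i => Real.sign (θ.1 i) * Real.sqrt (|θ.1 i| * ‖θ.2 i‖),
   fun i => Real.sqrt (|θ.1 i| / ‖θ.2 i‖) • θ.2 i)

lemma aff_smul {d : ℕ} (x : E d) (c : ℝ) (v : E (d + 1)) :
    aff x (c • v) = c * aff x v := by
  simp only [aff, PiLp.smul_apply, smul_eq_mul, mul_add, Finset.mul_sum]
  congr 1
  exact Finset.sum_congr rfl fun i _ => by ring

lemma relu_mul (c t : ℝ) (hc : 0 ≤ c) : relu (c * t) = c * relu t := by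
  unfold relu
  rw [mul_max_of_nonneg _ _ hc, mul_zero]

lemma networkFn_bal {d N : ℕ} (θ : Params d N) (x : E d) :
    networkFn (bal θ) x = networkFn θ x := by
  unfold networkFn bal
  refine Finset.sum_congr rfl fun i _ => ?_
  dsimp only
  rw [aff_smul, relu_mul _ _ (Real.sqrt_nonneg _)]
  rcases eq_or_ne ‖θ.2 i‖ 0 with h | h
  · have hw : θ.2 i = 0 := norm_eq_zero.mp h
    simp [hw, aff, relu]
  · rw [show Real.sign (θ.1 i) * Real.sqrt (|θ.1 i| * ‖θ.2 i‖) *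
        (Real.sqrt (|θ.1 i| / ‖θ.2 i‖) * relu (aff x (θ.2 i)))
        = Real.sign (θ.1 i) * (Real.sqrt (|θ.1 i| * ‖θ.2 i‖) *
          Real.sqrt (|θ.1 i| / ‖θ.2 i‖)) * relu (aff x (θ.2 i)) from by ring,
      ← Real.sqrt_mul (by positivity),
      show |θ.1 i| * ‖θ.2 i‖ * (|θ.1 i| / ‖θ.2 i‖) = |θ.1 i| ^ 2 from by
        field_simp,
      Real.sqrt_sq_eq_abs, abs_abs]
    have hsa : Real.sign (θ.1 i) * |θ.1 i| = θ.1 i := by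
      rcases lt_trichotomy (θ.1 i) 0 with h' | h' | h'
      · rw [Real.sign_of_neg h', abs_of_neg h']; ring
      · simp [h']
      · rw [Real.sign_of_pos h', abs_of_pos h', one_mul]
    rw [hsa]

lemma paramNormSq_bal {d N : ℕ} (θ : Params d N) :
    paramNormSq (bal θ) = 2 * pathNorm θ := by
  unfold paramNormSq pathNorm bal
  rw [← Finset.sum_add_distrib, Finset.mul_sum]
  refine Finset.sum_congr rfl fun i _ => ?_
  dsimp only
  have hw2 : ‖Real.sqrt (|θ.1 i| / ‖θ.2 i‖) • θ.2 i‖ ^ 2 = |θ.1 i| * ‖θ.2 i‖ := by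
    rw [norm_smul, mul_pow, Real.norm_eq_abs, abs_of_nonneg (Real.sqrt_nonneg _),
      Real.sq_sqrt (by positivity)]
    rcases eq_or_ne ‖θ.2 i‖ 0 with h | h
    · simp [h]
    · field_simp
  have ha2 : (Real.sign (θ.1 i) * Real.sqrt (|θ.1 i| * ‖θ.2 i‖)) ^ 2
      = |θ.1 i| * ‖θ.2 i‖ := by
    rcases lt_trichotomy (θ.1 i) 0 with h | h | h
    · rw [Real.sign_of_neg h, mul_pow, Real.sq_sqrt (by positivity)]; ring
    · simp [h]
    · rw [Real.sign_of_pos h, one_mul, Real.sq_sqrt (by positivity)]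
  rw [ha2, hw2]; ring

lemma two_pathNorm_le {d N : ℕ} (θ : Params d N) :
    2 * pathNorm θ ≤ paramNormSq θ := by
  unfold pathNorm paramNormSq
  rw [Finset.mul_sum, ← Finset.sum_add_distrib]
  refine Finset.sum_le_sum fun i _ => ?_
  nlinarith [two_mul_le_add_sq (|θ.1 i|) (‖θ.2 i‖), sq_abs (θ.1 i)]

/-- equivalence of path-norm regularization and weight-decay regularization. -/
theorem statement13 (d N n : ℕ) (X : Fin n → E d) (hX : ∀ i, ‖X i‖ ≤ 1)
    (Y : Fin n → ℝ) (lam : ℝ) (hlam : 0 < lam) :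
    (∀ θstar : Params d N,
      (∀ θ : Params d N,
          (∑ i, (networkFn θstar (X i) - Y i) ^ 2) / n + lam * pathNorm θstar ≤
            (∑ i, (networkFn θ (X i) - Y i) ^ 2) / n + lam * pathNorm θ) →
      ∃ θt : Params d N,
        (∀ θ : Params d N,
          (∑ i, (networkFn θt (X i) - Y i) ^ 2) / n + lam / 2 * paramNormSq θt ≤
            (∑ i, (networkFn θ (X i) - Y i) ^ 2) / n + lam / 2 * paramNormSq θ) ∧
        ∀ x : E d, ‖x‖ ≤ 1 → networkFn θstar x = networkFn θt x) ∧
    (∀ θstar : Params d N,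
      (∀ θ : Params d N,
          (∑ i, (networkFn θstar (X i) - Y i) ^ 2) / n + lam / 2 * paramNormSq θstar ≤
            (∑ i, (networkFn θ (X i) - Y i) ^ 2) / n + lam / 2 * paramNormSq θ) →
      ∀ θ : Params d N,
        (∑ i, (networkFn θstar (X i) - Y i) ^ 2) / n + lam * pathNorm θstar ≤
          (∑ i, (networkFn θ (X i) - Y i) ^ 2) / n + lam * pathNorm θ) := by
  constructor
  · intro θstar h
    refine ⟨bal θstar, fun θ => ?_, fun x _ => (networkFn_bal θstar x).symm⟩
    have e1 : (∑ i, (networkFn (bal θstar) (X i) - Y i) ^ 2) / n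
        + lam / 2 * paramNormSq (bal θstar)
        = (∑ i, (networkFn θstar (X i) - Y i) ^ 2) / n + lam * pathNorm θstar := by
      simp only [networkFn_bal, paramNormSq_bal]; ring
    have h2 := h θ
    have h3 := two_pathNorm_le θ
    nlinarith
  · intro θstar h θ
    have h2 := h (bal θ)
    simp only [networkFn_bal, paramNormSq_bal] at h2
    have h3 := two_pathNorm_le θstar
    nlinarith
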